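/- The Wilson polynomial is symmetric in its four parameters: let n ∈ ℕ, z ∈ ℂ, t = (t1,t2,t3,t4) ∈ ℂ⁴, and let σ be a permutation of {1,2,3,4}. Assume that t1+tj ∉ {0,−1,…,−(n−1)} for j = 2,3,4 and also t_{σ(1)}+t_{σ(j)} ∉ {0,−1,…,−(n−1)} for j = 2,3,4 (so that both sides are defined). Then W_n(z; t1, t2, t3, t4) = W_n(z; t_{σ(1)}, t_{σ(2)}, t_{σ(3)}, t_{σ(4)}). -/

import Mathlib

open Finset

/-- Pochhammer symbol `(a)_k = a (a+1) ⋯ (a+k-1)`. -/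
noncomputable def poch (a : ℂ) (k : ℕ) : ℂ := ∏ i ∈ Finset.range k, (a + i)

@[simp] lemma poch_zero (a : ℂ) : poch a 0 = 1 := by simp [poch]

lemma poch_succ (a : ℂ) (k : ℕ) : poch a (k+1) = poch a k * (a + k) := by
  simp [poch, Finset.prod_range_succ]

@[simp] lemma poch_one (a : ℂ) : poch a 1 = a := by simp [poch]

lemma poch_congr {a b : ℂ} (k : ℕ) (h : a = b) : poch a k = poch b k := by rw [h]

lemma poch_add (a : ℂ) (m k : ℕ) : poch a (m + k) = poch a m * poch (a + m) k := by
  simp only [poch, Finset.prod_range_add]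
  congr 1
  refine Finset.prod_congr rfl fun i _ => ?_
  push_cast; ring

lemma poch_one_add (a : ℂ) (k : ℕ) : poch a (1 + k) = a * poch (a + 1) k := by
  simpa using poch_add a 1 k

lemma poch_reflect (a : ℂ) (k : ℕ) : poch a k = (-1)^k * poch (1 - a - k) k := by
  induction k generalizing a with
  | zero => simp
  | succ k ih =>
    have h1 : poch (1 - a - ((k+1:ℕ):ℂ)) (k+1) = (1 - a - ((k+1:ℕ):ℂ)) * poch (1 - a - (k:ℂ)) k := by
      rw [show k + 1 = 1 + k by omega, poch_one_add]
      congr 1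
      exact poch_congr k (by push_cast; ring)
    rw [poch_succ, ih, h1]
    push_cast; ring

lemma poch_ne_zero {a : ℂ} {k : ℕ} (h : ∀ i : ℕ, i < k → a + i ≠ 0) : poch a k ≠ 0 :=
  Finset.prod_ne_zero_iff.2 fun i hi => h i (Finset.mem_range.1 hi)

lemma poch_neg_nat (n k : ℕ) (hk : k ≤ n) :
    poch (-(n:ℂ)) k = (-1)^k * (n.choose k) * (k.factorial) := by
  induction k with
  | zero => simp
  | succ k ih =>
    have hk' : k ≤ n := Nat.le_of_succ_le hk
    have hchoose : (n.choose (k+1) : ℂ) * (k+1) = (n.choose k) * ((n:ℂ) - k) := by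
      have := Nat.choose_succ_right_eq n k
      have hsub : ((n - k : ℕ) : ℂ) = (n : ℂ) - k := by
        push_cast [Nat.cast_sub hk']; ring
      calc (n.choose (k+1) : ℂ) * (k+1) = ((n.choose (k+1) * (k+1) : ℕ) : ℂ) := by push_cast; ring
        _ = ((n.choose k * (n - k) : ℕ) : ℂ) := by rw [this]
        _ = (n.choose k) * ((n:ℂ) - k) := by push_cast [Nat.cast_sub hk']; ring
    rw [poch_succ, ih hk']
    rw [Nat.factorial_succ]
    push_cast
    linear_combination ((-1)^k * (k.factorial:ℂ)) * hchoose

lemma saalschutz (a b c : ℂ) (n : ℕ) :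
    ∑ k ∈ Finset.range (n+1), (n.choose k : ℂ) * poch a k * poch b k *
      poch (c + k) (n - k) * poch (c - a - b) (n - k)
    = poch (c - a) n * poch (c - b) n := by
  induction n with
  | zero => simp
  | succ n ih =>
    set d : ℂ := c - a - b with hd
    set g : ℕ → ℂ := fun k => match k with
      | 0 => 0
      | (j+1) => (n.choose j : ℂ) * poch a (j+1) * poch b (j+1) *
          poch (c + j) (n - j) * poch d (n - j) with hg
    have hterm : ∀ k ∈ Finset.range (n+2),
        ((n+1).choose k : ℂ) * poch a k * poch b k * poch (c + k) (n+1 - k) * poch d (n+1 - k)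
        = (c - a + n) * (c - b + n) *
            ((n.choose k : ℂ) * poch a k * poch b k * poch (c + k) (n - k) * poch d (n - k))
          + (g k - g (k+1)) := by
      intro k hk
      rw [Finset.mem_range] at hk
      match k with
      | 0 =>
        simp only [hg]
        simp only [Nat.choose_zero_right, Nat.cast_one, poch_zero, Nat.cast_zero, add_zero,
          Nat.sub_zero, poch_one]
        rw [poch_succ c n, poch_succ d n]
        simp only [hd]
        simp only [Nat.zero_add, zero_add, poch_one]
        ring
      | (j+1) =>
        have hj : j ≤ n := by omega
        rcases Nat.lt_or_ge j n with hjn | hjn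
        · obtain ⟨m, hm⟩ : ∃ m, n = j + 1 + m := ⟨n - (j+1), by omega⟩
          subst hm
          have e1 : j + 1 + m + 1 - (j+1) = m + 1 := by omega
          have e2 : j + 1 + m - (j+1) = m := by omega
          have e3 : j + 1 + m - j = m + 1 := by omega
          rw [e1, e2]
          simp only [hg, e2, e3]
          have hpas : ((j+1+m+1).choose (j+1) : ℂ)
              = ((j+1+m).choose j : ℂ) + ((j+1+m).choose (j+1) : ℂ) := by
            rw [show j+1+m+1 = (j+1+m)+1 by omega]
            rw [Nat.choose_succ_succ (j+1+m) j]
            push_cast; ring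
          have hrel : ((j+1+m).choose (j+1) : ℂ) * ((j:ℂ)+1) = ((j+1+m).choose j : ℂ) * ((m:ℂ)+1) := by
            have h0 := Nat.choose_succ_right_eq (j+1+m) j
            rw [e3] at h0
            calc ((j+1+m).choose (j+1) : ℂ) * ((j:ℂ)+1)
                = (((j+1+m).choose (j+1) * (j+1) : ℕ) : ℂ) := by push_cast; ring
              _ = (((j+1+m).choose j * (m+1) : ℕ) : ℂ) := by rw [h0]
              _ = ((j+1+m).choose j : ℂ) * ((m:ℂ)+1) := by push_cast; ring
          rw [hpas]
          push_cast
          rw [poch_succ (c + ((j:ℂ) + 1)) m, poch_succ d m, poch_succ a (j+1), poch_succ b (j+1)]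
          have hsplit : poch (c + (j:ℂ)) (m+1) = (c + (j:ℂ)) * poch (c + ((j:ℂ) + 1)) m := by
            rw [show m + 1 = 1 + m by omega, poch_one_add]
            congr 1
            exact poch_congr m (by ring)
          rw [hsplit]
          simp only [hd]
          push_cast
          linear_combination (-(poch a (j+1) * poch b (j+1) * poch (c + ((j:ℂ) + 1)) m * poch (c-a-b) m * (c-a-b+(m:ℂ)))) * hrel
        · -- j = n
          have hjn' : j = n := le_antisymm hj hjn
          subst hjn'
          rw [show j + 1 - (j+1) = 0 by omega]
          simp only [hg, Nat.sub_self, show j - (j+1) = 0 by omega]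
          simp [Nat.choose_succ_self, Nat.choose_self, poch_succ]
    rw [Finset.sum_congr rfl hterm, Finset.sum_add_distrib, Finset.sum_range_sub' g (n+2)]
    have hg0 : g 0 = 0 := rfl
    have hgtop : g (n+2) = 0 := by
      simp only [hg]
      simp [Nat.choose_succ_self]
    rw [hg0, hgtop, ← Finset.mul_sum]
    rw [Finset.sum_range_succ, ih]
    simp [Nat.choose_succ_self, poch_succ]
    ring

noncomputable def T (n : ℕ) (z t u v w : ℂ) : ℂ :=
  ∑ j ∈ Finset.range (n+1), (-1:ℂ)^j * (n.choose j : ℂ) * poch (t+u+v+w+(n:ℂ)-1) j *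
    poch (t+z) j * poch (t-z) j * poch (t+u+(j:ℂ)) (n-j) * poch (t+v+(j:ℂ)) (n-j) *
    poch (t+w+(j:ℂ)) (n-j)

lemma T_comm_uv (n : ℕ) (z t u v w : ℂ) : T n z t u v w = T n z t v u w :=
  Finset.sum_congr rfl fun j _ => by ring_nf

lemma T_comm_vw (n : ℕ) (z t u v w : ℂ) : T n z t u v w = T n z t u w v :=
  Finset.sum_congr rfl fun j _ => by ring_nf

lemma inner_eval (N : ℕ) (A B V W : ℂ) (h : W - A - B = 1 - V - N) :
    ∑ m ∈ Finset.range (N+1), (-1:ℂ)^m * (N.choose m : ℂ) * poch A m * poch B m *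
      poch (V + m) (N - m) * poch (W + m) (N - m)
    = (-1:ℂ)^N * (poch (W - A) N * poch (W - B) N) := by
  rw [← saalschutz A B W N, Finset.mul_sum]
  refine Finset.sum_congr rfl fun m hm => ?_
  rw [Finset.mem_range] at hm
  have hmN : m ≤ N := by omega
  have hrefl : poch (V + m) (N - m) = (-1:ℂ)^(N-m) * poch (W - A - B) (N - m) := by
    rw [poch_reflect (V + (m:ℂ)) (N - m)]
    congr 1
    exact poch_congr _ (by rw [h]; push_cast [Nat.cast_sub hmN]; ring)
  rw [hrefl]
  have hpow : (-1:ℂ)^m * (-1:ℂ)^(N-m) = (-1:ℂ)^N := by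
    rw [← pow_add]; congr 1; omega
  linear_combination ((N.choose m : ℂ) * poch A m * poch B m * poch (W - A - B) (N - m) *
    poch (W + (m:ℂ)) (N - m)) * hpow

lemma sears (n : ℕ) (z t u v w : ℂ) : T n z t u v w = T n z u t v w := by
  have keyA : ∀ k, k ≤ n → poch (t+z) k * poch (t-z) k * poch (t+u+(k:ℂ)) (n-k)
      = ∑ j ∈ Finset.range (k+1), (k.choose j : ℂ) * poch (u-z) j * poch (u+z) j *
          poch (t+u+(j:ℂ)) (k-j) * poch (t+u-(u-z)-(u+z)) (k-j) * poch (t+u+(k:ℂ)) (n-k) := by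
    intro k hk
    have h1 : poch (t+z) k = poch ((t+u) - (u-z)) k := poch_congr k (by ring)
    have h2 : poch (t-z) k = poch ((t+u) - (u+z)) k := poch_congr k (by ring)
    rw [h1, h2, ← saalschutz (u-z) (u+z) (t+u) k, Finset.sum_mul]
  -- double sum form
  have step1 : T n z t u v w = ∑ k ∈ Finset.Ico 0 (n+1), ∑ j ∈ Finset.Ico 0 (k+1),
      ((k.choose j : ℂ) * poch (u-z) j * poch (u+z) j * poch (t-u) (k-j) *
        poch (t+u+(j:ℂ)) (n-j)) *
      ((-1:ℂ)^k * (n.choose k : ℂ) * poch (t+u+v+w+(n:ℂ)-1) k *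
        poch (t+v+(k:ℂ)) (n-k) * poch (t+w+(k:ℂ)) (n-k)) := by
    rw [T, ← Finset.range_eq_Ico]
    refine Finset.sum_congr rfl fun k hk => ?_
    rw [Finset.mem_range] at hk
    have hk' : k ≤ n := by omega
    calc (-1:ℂ)^k * (n.choose k : ℂ) * poch (t+u+v+w+(n:ℂ)-1) k *
          poch (t+z) k * poch (t-z) k * poch (t+u+(k:ℂ)) (n-k) * poch (t+v+(k:ℂ)) (n-k) *
          poch (t+w+(k:ℂ)) (n-k)
        = (poch (t+z) k * poch (t-z) k * poch (t+u+(k:ℂ)) (n-k)) *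
          ((-1:ℂ)^k * (n.choose k : ℂ) * poch (t+u+v+w+(n:ℂ)-1) k *
            poch (t+v+(k:ℂ)) (n-k) * poch (t+w+(k:ℂ)) (n-k)) := by ring
      _ = _ := by
          rw [keyA k hk', Finset.sum_mul, ← Finset.range_eq_Ico]
          refine Finset.sum_congr rfl fun j hj => ?_
          rw [Finset.mem_range] at hj
          have hjk : j ≤ k := by omega
          have hsplit : poch (t+u+(j:ℂ)) (n-j)
              = poch (t+u+(j:ℂ)) (k-j) * poch (t+u+(k:ℂ)) (n-k) := by
            rw [show n - j = (k-j) + (n-k) by omega, poch_add]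
            congr 1
            exact poch_congr _ (by push_cast [Nat.cast_sub hjk]; ring)
          rw [hsplit]
          have h3 : poch (t+u-(u-z)-(u+z)) (k-j) = poch (t-u) (k-j) := poch_congr _ (by ring)
          rw [h3]
          ring
  rw [step1, ← Finset.sum_Ico_Ico_comm 0 (n+1)]
  -- now evaluate inner sums
  rw [← Finset.range_eq_Ico]
  rw [T]
  refine Finset.sum_congr rfl fun j hj => ?_
  rw [Finset.mem_range] at hj
  have hjn : j ≤ n := by omega
  rw [Finset.sum_Ico_eq_sum_range]
  rw [show n + 1 - j = (n-j) + 1 by omega]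
  have hterm : ∀ m ∈ Finset.range ((n-j)+1),
      ((((j+m).choose j : ℂ)) * poch (u-z) j * poch (u+z) j * poch (t-u) ((j+m)-j) *
        poch (t+u+((j:ℂ))) (n-j)) *
      ((-1:ℂ)^(j+m) * (n.choose (j+m) : ℂ) * poch (t+u+v+w+(n:ℂ)-1) (j+m) *
        poch (t+v+((j+m:ℕ):ℂ)) (n-(j+m)) * poch (t+w+((j+m:ℕ):ℂ)) (n-(j+m)))
      = ((-1:ℂ)^j * (n.choose j : ℂ) * poch (t+u+v+w+(n:ℂ)-1) j * poch (u-z) j *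
          poch (u+z) j * poch (t+u+(j:ℂ)) (n-j)) *
        ((-1:ℂ)^m * ((n-j).choose m : ℂ) * poch (t+u+v+w+(n:ℂ)-1+(j:ℂ)) m * poch (t-u) m *
          poch ((t+v+(j:ℂ)) + (m:ℂ)) ((n-j)-m) * poch ((t+w+(j:ℂ)) + (m:ℂ)) ((n-j)-m)) := by
    intro m hm
    rw [Finset.mem_range] at hm
    have hmn : j + m ≤ n := by omega
    have e1 : (j+m) - j = m := by omega
    have e2 : n - (j+m) = (n-j) - m := by omega
    have hchn : n.choose (j+m) * ((j+m).choose j) = n.choose j * ((n-j).choose m) := by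
      rw [Nat.choose_mul (Nat.le_add_right j m), e1]
    have hch : ((n.choose (j+m)) : ℂ) * (((j+m).choose j) : ℂ)
        = ((n.choose j) : ℂ) * (((n-j).choose m) : ℂ) := by exact_mod_cast hchn
    have hS : poch (t+u+v+w+(n:ℂ)-1) (j+m)
        = poch (t+u+v+w+(n:ℂ)-1) j * poch (t+u+v+w+(n:ℂ)-1+(j:ℂ)) m := poch_add _ j m
    have hV : poch (t+v+((j+m:ℕ):ℂ)) (n-(j+m)) = poch ((t+v+(j:ℂ)) + (m:ℂ)) ((n-j)-m) := by
      rw [e2]; exact poch_congr _ (by push_cast; ring)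
    have hW : poch (t+w+((j+m:ℕ):ℂ)) (n-(j+m)) = poch ((t+w+(j:ℂ)) + (m:ℂ)) ((n-j)-m) := by
      rw [e2]; exact poch_congr _ (by push_cast; ring)
    rw [e1, hS, hV, hW, pow_add]
    linear_combination (poch (u-z) j * poch (u+z) j * poch (t-u) m * poch (t+u+(j:ℂ)) (n-j) *
      (-1:ℂ)^j * (-1:ℂ)^m * poch (t+u+v+w+(n:ℂ)-1) j * poch (t+u+v+w+(n:ℂ)-1+(j:ℂ)) m *
      poch ((t+v+(j:ℂ)) + (m:ℂ)) ((n-j)-m) * poch ((t+w+(j:ℂ)) + (m:ℂ)) ((n-j)-m)) * hch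
  rw [Finset.sum_congr rfl hterm, ← Finset.mul_sum]
  have hcond : (t+w+(j:ℂ)) - (t+u+v+w+(n:ℂ)-1+(j:ℂ)) - (t-u) = 1 - (t+v+(j:ℂ)) - ((n-j : ℕ):ℂ) := by
    push_cast [Nat.cast_sub hjn]; ring
  rw [inner_eval (n-j) _ _ _ _ hcond]
  have hWA : poch ((t+w+(j:ℂ)) - (t+u+v+w+(n:ℂ)-1+(j:ℂ))) (n-j)
      = (-1:ℂ)^(n-j) * poch (u+v+(j:ℂ)) (n-j) := by
    have h1 : poch (u+v+(j:ℂ)) (n-j)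
        = (-1:ℂ)^(n-j) * poch (1 - (u+v+(j:ℂ)) - ((n-j:ℕ):ℂ)) (n-j) := poch_reflect _ _
    have h2 : poch ((t+w+(j:ℂ)) - (t+u+v+w+(n:ℂ)-1+(j:ℂ))) (n-j)
        = poch (1 - (u+v+(j:ℂ)) - ((n-j:ℕ):ℂ)) (n-j) :=
      poch_congr _ (by push_cast [Nat.cast_sub hjn]; ring)
    have hsq : ((-1:ℂ))^(n-j) * ((-1:ℂ))^(n-j) = 1 := by rw [← mul_pow]; norm_num
    rw [h2, h1]
    rw [← mul_assoc, hsq, one_mul]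
  have hWB : poch ((t+w+(j:ℂ)) - (t-u)) (n-j) = poch (u+w+(j:ℂ)) (n-j) :=
    poch_congr _ (by ring)
  rw [hWA, hWB]
  have hsq : ((-1:ℂ))^(n-j) * ((-1:ℂ))^(n-j) = 1 := by rw [← mul_pow]; norm_num
  rw [show ((-1:ℂ))^(n-j) * (((-1:ℂ))^(n-j) * poch (u+v+(j:ℂ)) (n-j) * poch (u+w+(j:ℂ)) (n-j))
      = poch (u+v+(j:ℂ)) (n-j) * poch (u+w+(j:ℂ)) (n-j) by
    rw [← mul_assoc, ← mul_assoc, hsq, one_mul]]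
  ring_nf

/-- The Wilson polynomial `W_n(z; t1,t2,t3,t4)` in the variable `z` (with `x = -z²`). -/
noncomputable def wilson (n : ℕ) (z t1 t2 t3 t4 : ℂ) : ℂ :=
  poch (t1 + t2) n * poch (t1 + t3) n * poch (t1 + t4) n *
    ∑ k ∈ Finset.range (n + 1),
      (poch (-(n : ℂ)) k * poch (t1 + t2 + t3 + t4 + (n : ℂ) - 1) k *
        poch (t1 + z) k * poch (t1 - z) k) /
      ((k.factorial : ℂ) * poch (t1 + t2) k * poch (t1 + t3) k * poch (t1 + t4) k)


lemma wilson_eq_T (n : ℕ) (z t u v w : ℂ)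
    (hu : ∀ i : ℕ, i < n → t + u + (i:ℂ) ≠ 0)
    (hv : ∀ i : ℕ, i < n → t + v + (i:ℂ) ≠ 0)
    (hw : ∀ i : ℕ, i < n → t + w + (i:ℂ) ≠ 0) :
    wilson n z t u v w = T n z t u v w := by
  rw [wilson, T, Finset.mul_sum]
  refine Finset.sum_congr rfl fun k hk => ?_
  rw [Finset.mem_range] at hk
  have hk' : k ≤ n := by omega
  have hu0 : poch (t+u) k ≠ 0 := poch_ne_zero fun i hi => hu i (by omega)
  have hv0 : poch (t+v) k ≠ 0 := poch_ne_zero fun i hi => hv i (by omega)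
  have hw0 : poch (t+w) k ≠ 0 := poch_ne_zero fun i hi => hw i (by omega)
  have hfac : (k.factorial : ℂ) ≠ 0 := Nat.cast_ne_zero.2 (Nat.factorial_ne_zero k)
  have hden : (k.factorial : ℂ) * poch (t+u) k * poch (t+v) k * poch (t+w) k ≠ 0 :=
    mul_ne_zero (mul_ne_zero (mul_ne_zero hfac hu0) hv0) hw0
  have su : poch (t+u) n = poch (t+u) k * poch (t+u+(k:ℂ)) (n-k) := by
    rw [show n = k + (n-k) by omega, poch_add]
    rw [show k + (n-k) - k = n - k by omega]
  have sv : poch (t+v) n = poch (t+v) k * poch (t+v+(k:ℂ)) (n-k) := by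
    rw [show n = k + (n-k) by omega, poch_add]
    rw [show k + (n-k) - k = n - k by omega]
  have sw : poch (t+w) n = poch (t+w) k * poch (t+w+(k:ℂ)) (n-k) := by
    rw [show n = k + (n-k) by omega, poch_add]
    rw [show k + (n-k) - k = n - k by omega]
  rw [poch_neg_nat n k hk', su, sv, sw]
  field_simp

lemma T_swap (n : ℕ) (z : ℂ) (x y : Fin 4) (t : Fin 4 → ℂ) :
    T n z (t (Equiv.swap x y 0)) (t (Equiv.swap x y 1)) (t (Equiv.swap x y 2))
      (t (Equiv.swap x y 3)) = T n z (t 0) (t 1) (t 2) (t 3) := by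
  fin_cases x <;> fin_cases y <;>
    simp only [Equiv.swap_apply_left, Equiv.swap_apply_right, Equiv.swap_self,
      Equiv.refl_apply, Equiv.swap_apply_def] <;>
    norm_num
  · -- swap 0 1
    exact sears n z (t 1) (t 0) (t 2) (t 3)
  · -- swap 0 2
    calc T n z (t 2) (t 1) (t 0) (t 3) = T n z (t 2) (t 0) (t 1) (t 3) :=
          T_comm_uv n z (t 2) (t 1) (t 0) (t 3)
      _ = T n z (t 0) (t 2) (t 1) (t 3) := sears n z (t 2) (t 0) (t 1) (t 3)
      _ = T n z (t 0) (t 1) (t 2) (t 3) := T_comm_uv n z (t 0) (t 2) (t 1) (t 3)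
  · -- swap 0 3
    calc T n z (t 3) (t 1) (t 2) (t 0) = T n z (t 3) (t 1) (t 0) (t 2) :=
          (T_comm_vw n z (t 3) (t 1) (t 0) (t 2)).symm
      _ = T n z (t 3) (t 0) (t 1) (t 2) := T_comm_uv n z (t 3) (t 1) (t 0) (t 2)
      _ = T n z (t 0) (t 3) (t 1) (t 2) := sears n z (t 3) (t 0) (t 1) (t 2)
      _ = T n z (t 0) (t 1) (t 3) (t 2) := T_comm_uv n z (t 0) (t 3) (t 1) (t 2)
      _ = T n z (t 0) (t 1) (t 2) (t 3) := T_comm_vw n z (t 0) (t 1) (t 3) (t 2)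
  · -- swap 1 0
    exact sears n z (t 1) (t 0) (t 2) (t 3)
  · -- swap 1 2
    exact T_comm_uv n z (t 0) (t 2) (t 1) (t 3)
  · -- swap 1 3
    calc T n z (t 0) (t 3) (t 2) (t 1) = T n z (t 0) (t 3) (t 1) (t 2) :=
          (T_comm_vw n z (t 0) (t 3) (t 1) (t 2)).symm
      _ = T n z (t 0) (t 1) (t 3) (t 2) := T_comm_uv n z (t 0) (t 3) (t 1) (t 2)
      _ = T n z (t 0) (t 1) (t 2) (t 3) := T_comm_vw n z (t 0) (t 1) (t 3) (t 2)
  · -- swap 2 0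
    calc T n z (t 2) (t 1) (t 0) (t 3) = T n z (t 2) (t 0) (t 1) (t 3) :=
          T_comm_uv n z (t 2) (t 1) (t 0) (t 3)
      _ = T n z (t 0) (t 2) (t 1) (t 3) := sears n z (t 2) (t 0) (t 1) (t 3)
      _ = T n z (t 0) (t 1) (t 2) (t 3) := T_comm_uv n z (t 0) (t 2) (t 1) (t 3)
  · -- swap 2 1
    exact T_comm_uv n z (t 0) (t 2) (t 1) (t 3)
  · -- swap 2 3
    exact T_comm_vw n z (t 0) (t 1) (t 3) (t 2)
  · -- swap 3 0
    calc T n z (t 3) (t 1) (t 2) (t 0) = T n z (t 3) (t 1) (t 0) (t 2) :=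
          (T_comm_vw n z (t 3) (t 1) (t 0) (t 2)).symm
      _ = T n z (t 3) (t 0) (t 1) (t 2) := T_comm_uv n z (t 3) (t 1) (t 0) (t 2)
      _ = T n z (t 0) (t 3) (t 1) (t 2) := sears n z (t 3) (t 0) (t 1) (t 2)
      _ = T n z (t 0) (t 1) (t 3) (t 2) := T_comm_uv n z (t 0) (t 3) (t 1) (t 2)
      _ = T n z (t 0) (t 1) (t 2) (t 3) := T_comm_vw n z (t 0) (t 1) (t 3) (t 2)
  · -- swap 3 1
    calc T n z (t 0) (t 3) (t 2) (t 1) = T n z (t 0) (t 3) (t 1) (t 2) :=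
          (T_comm_vw n z (t 0) (t 3) (t 1) (t 2)).symm
      _ = T n z (t 0) (t 1) (t 3) (t 2) := T_comm_uv n z (t 0) (t 3) (t 1) (t 2)
      _ = T n z (t 0) (t 1) (t 2) (t 3) := T_comm_vw n z (t 0) (t 1) (t 3) (t 2)
  · -- swap 3 2
    exact T_comm_vw n z (t 0) (t 1) (t 3) (t 2)

lemma T_perm (n : ℕ) (z : ℂ) (σ : Equiv.Perm (Fin 4)) :
    ∀ t : Fin 4 → ℂ, T n z (t (σ 0)) (t (σ 1)) (t (σ 2)) (t (σ 3))
      = T n z (t 0) (t 1) (t 2) (t 3) := by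
  refine Equiv.Perm.swap_induction_on σ (fun t => rfl) (fun f x y hxy ih t => ?_)
  · have e : ∀ i : Fin 4, t ((Equiv.swap x y * f) i) = (fun a => t (Equiv.swap x y a)) (f i) :=
      fun i => rfl
    rw [e 0, e 1, e 2, e 3, ih (fun a => t (Equiv.swap x y a))]
    exact T_swap n z x y t


theorem wilson_parameter_symmetry (n : ℕ) (z : ℂ) (t : Fin 4 → ℂ) (σ : Equiv.Perm (Fin 4))
    (h : ∀ j : Fin 4, j ≠ 0 → ∀ k : ℕ, k < n → t 0 + t j + (k : ℂ) ≠ 0)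
    (hσ : ∀ j : Fin 4, j ≠ 0 → ∀ k : ℕ, k < n → t (σ 0) + t (σ j) + (k : ℂ) ≠ 0) :
    wilson n z (t 0) (t 1) (t 2) (t 3)
      = wilson n z (t (σ 0)) (t (σ 1)) (t (σ 2)) (t (σ 3)) := by
  rw [wilson_eq_T n z (t 0) (t 1) (t 2) (t 3)
      (fun i hi => h 1 (by decide) i hi) (fun i hi => h 2 (by decide) i hi)
      (fun i hi => h 3 (by decide) i hi),
    wilson_eq_T n z (t (σ 0)) (t (σ 1)) (t (σ 2)) (t (σ 3))
      (fun i hi => hσ 1 (by decide) i hi) (fun i hi => hσ 2 (by decide) i hi)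
      (fun i hi => hσ 3 (by decide) i hi),
    T_perm n z σ t]
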